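/- arXiv:2010.05110 — 4 statements merged into one kernel-verified Lean document; each statement's English description precedes it below -/
import Mathlib

section
/- For the classical ideal gas statistical manifold with metric g = Hess F and AC tensor C = −D³F where F(β,γ) = c β^{-3/2} e^{-γ}, the Yukawa term C_{ijk}C^{ijk} − C_i C^i vanishes identically (where C_i = C^j_{ij}, indices raised with g^{-1}). -/
private lemma aux_deriv_rpow (k r g b : ℝ) (hb : b ≠ 0) :
    deriv (fun b' => k * b' ^ r * Real.exp (-g)) b = k * r * b ^ (r - 1) * Real.exp (-g) := by
  have h : HasDerivAt (fun b' : ℝ => k * b' ^ r * Real.exp (-g))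
      ((k * (r * b ^ (r - 1))) * Real.exp (-g)) b :=
    ((Real.hasDerivAt_rpow_const (Or.inl hb)).const_mul k).mul_const _
  rw [h.deriv]; ring

private lemma aux_deriv_exp (A g : ℝ) :
    deriv (fun g' => A * Real.exp (-g')) g = -A * Real.exp (-g) := by
  have h : HasDerivAt (fun g' : ℝ => Real.exp (-g')) (Real.exp (-g) * (-1)) g :=
    (Real.hasDerivAt_exp (-g)).comp g (hasDerivAt_neg g)
  have h2 := h.const_mul A
  rw [h2.deriv]; ring

/-- For the classical ideal gas statistical manifold with metric
`g_ij = ∂_i∂_j F` and AC tensor `C_ijk = −∂_i∂_j∂_k F`, where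
`F(β,γ) = c β^{-3/2} e^{-γ}` and the indices run over the coordinates `(β,γ)`, the
Yukawa term `C_{ijk}C^{ijk} − C_i C^i` vanishes identically (indices raised with `g⁻¹`,
`C_i = C^j_{ij}`, `C^i = g^{ij} C_j`; `g` is nondegenerate). -/
theorem stmt_14 (c : ℝ) (hc : 0 < c) (β γ : ℝ) (hβ : 0 < β)
    (F : ℝ → ℝ → ℝ)
    (hF : ∀ b g, F b g = c * b ^ ((-3 : ℝ) / 2) * Real.exp (-g))
    (pd : Fin 2 → (ℝ → ℝ → ℝ) → (ℝ → ℝ → ℝ))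
    (hpd0 : ∀ f b g, pd 0 f b g = deriv (fun b' => f b' g) b)
    (hpd1 : ∀ f b g, pd 1 f b g = deriv (fun g' => f b g') g)
    (gm : Matrix (Fin 2) (Fin 2) ℝ) (hgm : ∀ i j, gm i j = pd i (pd j F) β γ)
    (hdet : gm.det ≠ 0)
    (C : Fin 2 → Fin 2 → Fin 2 → ℝ)
    (hC : ∀ i j k, C i j k = -(pd i (pd j (pd k F)) β γ))
    (Ci : Fin 2 → ℝ) (hCi : ∀ i, Ci i = ∑ j, ∑ l, gm⁻¹ j l * C l i j) :
    (∑ i, ∑ j, ∑ k, ∑ i', ∑ j', ∑ k',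
        C i j k * gm⁻¹ i i' * gm⁻¹ j j' * gm⁻¹ k k' * C i' j' k')
      - (∑ i, ∑ j, gm⁻¹ i j * Ci i * Ci j) = 0 := by
  have key0 : ∀ (f : ℝ → ℝ → ℝ) (k r : ℝ),
      (∀ b g, b ≠ 0 → f b g = k * b ^ r * Real.exp (-g)) →
      ∀ b g, b ≠ 0 → pd 0 f b g = k * r * b ^ (r - 1) * Real.exp (-g) := by
    intro f k r hf b g hb
    rw [hpd0]
    have hev : (fun b' => f b' g) =ᶠ[nhds b] (fun b' => k * b' ^ r * Real.exp (-g)) := by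
      filter_upwards [eventually_ne_nhds hb] with b' hb' using hf b' g hb'
    rw [hev.deriv_eq, aux_deriv_rpow k r g b hb]
  have key1 : ∀ (f : ℝ → ℝ → ℝ) (k r : ℝ),
      (∀ b g, b ≠ 0 → f b g = k * b ^ r * Real.exp (-g)) →
      ∀ b g, b ≠ 0 → pd 1 f b g = -k * b ^ r * Real.exp (-g) := by
    intro f k r hf b g hb
    rw [hpd1]
    have hfun : (fun g' => f b g') = fun g' => (k * b ^ r) * Real.exp (-g') :=
      funext fun g' => by rw [hf b g' hb]
    rw [hfun, aux_deriv_exp]; ring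
  have P0 : ∀ b g, b ≠ 0 → F b g = c * b ^ ((-3 : ℝ) / 2) * Real.exp (-g) :=
    fun b g _ => hF b g
  -- first derivatives
  have A0 := key0 _ _ _ P0
  have A1 := key1 _ _ _ P0
  -- second derivatives
  have B00 := key0 _ _ _ A0
  have B10 := key1 _ _ _ A0
  have B01 := key0 _ _ _ A1
  have B11 := key1 _ _ _ A1
  -- third derivatives
  have T000 := key0 _ _ _ B00
  have T100 := key1 _ _ _ B00
  have T010 := key0 _ _ _ B10
  have T110 := key1 _ _ _ B10
  have T001 := key0 _ _ _ B01
  have T101 := key1 _ _ _ B01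
  have T011 := key0 _ _ _ B11
  have T111 := key1 _ _ _ B11
  set x := β ^ ((-1 : ℝ) / 2) with hxdef
  have hxn : ∀ n : ℕ, β ^ (-(n : ℝ) / 2) = x ^ n := by
    intro n
    rw [hxdef, show (-(n : ℝ) / 2) = ((-1 : ℝ) / 2) * n by ring,
      Real.rpow_mul hβ.le, Real.rpow_natCast]
  have e3 : β ^ ((-3 : ℝ) / 2) = x ^ 3 := by
    rw [show ((-3 : ℝ) / 2) = -((3 : ℕ) : ℝ) / 2 by norm_num]; exact hxn 3
  have e5 : β ^ ((-3 : ℝ) / 2 - 1) = x ^ 5 := by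
    rw [show ((-3 : ℝ) / 2 - 1) = -((5 : ℕ) : ℝ) / 2 by norm_num]; exact hxn 5
  have e7 : β ^ ((-3 : ℝ) / 2 - 1 - 1) = x ^ 7 := by
    rw [show ((-3 : ℝ) / 2 - 1 - 1) = -((7 : ℕ) : ℝ) / 2 by norm_num]; exact hxn 7
  have e9 : β ^ ((-3 : ℝ) / 2 - 1 - 1 - 1) = x ^ 9 := by
    rw [show ((-3 : ℝ) / 2 - 1 - 1 - 1) = -((9 : ℕ) : ℝ) / 2 by norm_num]; exact hxn 9
  have hbne : β ≠ 0 := hβ.ne'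
  set E := Real.exp (-γ) with hEdef
  -- metric entries
  have hg00 : gm 0 0 = 15 / 4 * c * E * x ^ 7 := by
    rw [hgm, B00 β γ hbne, e7]; ring
  have hg01 : gm 0 1 = 3 / 2 * c * E * x ^ 5 := by
    rw [hgm, B01 β γ hbne, e5]; ring
  have hg10 : gm 1 0 = 3 / 2 * c * E * x ^ 5 := by
    rw [hgm, B10 β γ hbne, e5]; ring
  have hg11 : gm 1 1 = c * E * x ^ 3 := by
    rw [hgm, B11 β γ hbne, e3]; ring
  -- AC tensor entries
  have hc000 : C 0 0 0 = 105 / 8 * c * E * x ^ 9 := by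
    rw [hC, T000 β γ hbne, e9]; ring
  have hc100 : C 1 0 0 = 15 / 4 * c * E * x ^ 7 := by
    rw [hC, T100 β γ hbne, e7]; ring
  have hc010 : C 0 1 0 = 15 / 4 * c * E * x ^ 7 := by
    rw [hC, T010 β γ hbne, e7]; ring
  have hc001 : C 0 0 1 = 15 / 4 * c * E * x ^ 7 := by
    rw [hC, T001 β γ hbne, e7]; ring
  have hc110 : C 1 1 0 = 3 / 2 * c * E * x ^ 5 := by
    rw [hC, T110 β γ hbne, e5]; ring
  have hc101 : C 1 0 1 = 3 / 2 * c * E * x ^ 5 := by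
    rw [hC, T101 β γ hbne, e5]; ring
  have hc011 : C 0 1 1 = 3 / 2 * c * E * x ^ 5 := by
    rw [hC, T011 β γ hbne, e5]; ring
  have hc111 : C 1 1 1 = c * E * x ^ 3 := by
    rw [hC, T111 β γ hbne, e3]; ring
  -- inverse entries
  have hinv : ∀ i j, gm⁻¹ i j = gm.det⁻¹ * gm.adjugate i j := by
    intro i j
    rw [Matrix.inv_def, Ring.inverse_eq_inv, Matrix.smul_apply, smul_eq_mul]
  have hi00 : gm⁻¹ 0 0 = gm.det⁻¹ * gm 1 1 := by
    rw [hinv, Matrix.adjugate_fin_two]; simp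
  have hi01 : gm⁻¹ 0 1 = gm.det⁻¹ * (-(gm 0 1)) := by
    rw [hinv, Matrix.adjugate_fin_two]; simp
  have hi10 : gm⁻¹ 1 0 = gm.det⁻¹ * (-(gm 1 0)) := by
    rw [hinv, Matrix.adjugate_fin_two]; simp
  have hi11 : gm⁻¹ 1 1 = gm.det⁻¹ * gm 0 0 := by
    rw [hinv, Matrix.adjugate_fin_two]; simp
  have h0 := hCi 0
  have h1 := hCi 1
  simp only [Fin.sum_univ_two] at h0 h1 ⊢
  simp only [hi00, hi01, hi10, hi11, hg00, hg01, hg10, hg11, hc000, hc100, hc010,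
    hc001, hc110, hc101, hc011, hc111] at h0 h1 ⊢
  simp only [h0, h1]
  ring
end

section
/- For the bosonic ideal gas metric g_{ββ} = (15/4)λ^{-3}β^{-2}Li_{5/2}(η), g_{βγ} = (3/2)λ^{-3}β^{-1}Li_{3/2}(η), g_{γγ} = λ^{-3}Li_{1/2}(η), the determinant is det g = (3/4)λ^{-6}β^{-2}[5 Li_{5/2}(η)Li_{1/2}(η) − 3 Li_{3/2}(η)²], and the bracketed quantity A(η) = 5Li_{5/2}(η)Li_{1/2}(η) − 3Li_{3/2}(η)² is strictly positive for 0 < η < 1. -/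
/-- The polylogarithm `Li_s(η) = Σ_{k≥1} η^k / k^s`. -/
noncomputable def Li (s : ℝ) (η : ℝ) : ℝ := ∑' k : ℕ, η ^ (k + 1) / ((k : ℝ) + 1) ^ s

lemma Li_term_nonneg (s : ℝ) {η : ℝ} (hη0 : 0 < η) (k : ℕ) :
    0 ≤ η ^ (k + 1) / ((k : ℝ) + 1) ^ s := by
  have h1 : (0 : ℝ) < ((k : ℝ) + 1) ^ s :=
    Real.rpow_pos_of_pos (by positivity) s
  positivity

lemma summable_Li {s : ℝ} (hs : 0 ≤ s) {η : ℝ} (hη0 : 0 < η) (hη1 : η < 1) :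
    Summable (fun k : ℕ => η ^ (k + 1) / ((k : ℝ) + 1) ^ s) := by
  refine Summable.of_nonneg_of_le (fun k => Li_term_nonneg s hη0 k) (fun k => ?_)
    ((summable_geometric_of_lt_one hη0.le hη1).comp_injective (add_left_injective 1))
  have hk0 : (0 : ℝ) ≤ (k : ℝ) := Nat.cast_nonneg k
  have h1 : (1 : ℝ) ≤ ((k : ℝ) + 1) ^ s := Real.one_le_rpow (by linarith) hs
  have h2 : (0 : ℝ) < η ^ (k + 1) := by positivity
  show η ^ (k + 1) / ((k : ℝ) + 1) ^ s ≤ η ^ (k + 1)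
  calc η ^ (k + 1) / ((k : ℝ) + 1) ^ s ≤ η ^ (k + 1) / 1 :=
        div_le_div_of_nonneg_left h2.le (by norm_num) h1
    _ = η ^ (k + 1) := by ring

lemma Li_pos {s : ℝ} (hs : 0 ≤ s) {η : ℝ} (hη0 : 0 < η) (hη1 : η < 1) :
    0 < Li s η := by
  apply Summable.tsum_pos (summable_Li hs hη0 hη1) (fun k => Li_term_nonneg s hη0 k) 0
  have h : (0 : ℝ) < ((0 : ℕ) + 1 : ℝ) ^ s := Real.rpow_pos_of_pos (by norm_num) s
  positivity

lemma Li_sq_le {η : ℝ} (hη0 : 0 < η) (hη1 : η < 1) :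
    Li (3 / 2) η ^ 2 ≤ Li (5 / 2) η * Li (1 / 2) η := by
  set r : ℕ → ℝ := fun k => η ^ (k + 1) / ((k : ℝ) + 1) ^ (3 / 2 : ℝ) with hr
  set f : ℕ → ℝ := fun k => η ^ (k + 1) / ((k : ℝ) + 1) ^ (5 / 2 : ℝ) with hf
  set q : ℕ → ℝ := fun k => η ^ (k + 1) / ((k : ℝ) + 1) ^ (1 / 2 : ℝ) with hq
  have hsf : Summable f := summable_Li (by norm_num) hη0 hη1
  have hsq : Summable q := summable_Li (by norm_num) hη0 hη1
  have hsr : Summable r := summable_Li (by norm_num) hη0 hη1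
  have hkey : ∀ k : ℕ, r k ^ 2 = f k * q k := by
    intro k
    have hk : (0 : ℝ) < (k : ℝ) + 1 := by positivity
    have e1 : (((k : ℝ) + 1) ^ (3 / 2 : ℝ)) ^ 2 =
        ((k : ℝ) + 1) ^ (5 / 2 : ℝ) * ((k : ℝ) + 1) ^ (1 / 2 : ℝ) := by
      rw [← Real.rpow_natCast (((k : ℝ) + 1) ^ (3 / 2 : ℝ)) 2, ← Real.rpow_mul hk.le,
        ← Real.rpow_add hk]
      norm_num
    simp only [hr, hf, hq]
    rw [div_pow, e1, div_mul_div_comm, pow_two]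
  have hLi52 : 0 < Li (5 / 2) η := Li_pos (by norm_num) hη0 hη1
  have hLi12 : 0 < Li (1 / 2) η := Li_pos (by norm_num) hη0 hη1
  have hfq : (0 : ℝ) ≤ Li (5 / 2) η * Li (1 / 2) η := by positivity
  have hbound : Li (3 / 2) η ≤ Real.sqrt (Li (5 / 2) η * Li (1 / 2) η) := by
    apply Summable.tsum_le_of_sum_le hsr
    intro s
    have h1 : (∑ k ∈ s, r k) ^ 2 ≤ (∑ k ∈ s, f k) * ∑ k ∈ s, q k :=
      Finset.sum_sq_le_sum_mul_sum_of_sq_eq_mul s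
        (fun k _ => Li_term_nonneg _ hη0 k) (fun k _ => Li_term_nonneg _ hη0 k)
        (fun k _ => hkey k)
    have h2 : (∑ k ∈ s, f k) * ∑ k ∈ s, q k ≤ Li (5 / 2) η * Li (1 / 2) η :=
      mul_le_mul (Summable.sum_le_tsum s (fun k _ => Li_term_nonneg _ hη0 k) hsf)
        (Summable.sum_le_tsum s (fun k _ => Li_term_nonneg _ hη0 k) hsq)
        (Finset.sum_nonneg (fun k _ => Li_term_nonneg _ hη0 k)) hLi52.le
    exact Real.le_sqrt_of_sq_le (h1.trans h2)
  have hrnn : (0 : ℝ) ≤ Li (3 / 2) η := tsum_nonneg (fun k => Li_term_nonneg _ hη0 k)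
  calc Li (3 / 2) η ^ 2 ≤ Real.sqrt (Li (5 / 2) η * Li (1 / 2) η) ^ 2 :=
        pow_le_pow_left₀ hrnn hbound 2
    _ = Li (5 / 2) η * Li (1 / 2) η := Real.sq_sqrt hfq

/-- For the bosonic ideal gas metric
`g_ββ = (15/4)λ^{-3}β^{-2}Li_{5/2}(η)`, `g_βγ = (3/2)λ^{-3}β^{-1}Li_{3/2}(η)`,
`g_γγ = λ^{-3}Li_{1/2}(η)` (with `a = λ^{-3}`), the determinant is
`det g = (3/4)λ^{-6}β^{-2}[5 Li_{5/2}(η)Li_{1/2}(η) − 3 Li_{3/2}(η)²]`, and the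
bracketed quantity `A(η) = 5Li_{5/2}(η)Li_{1/2}(η) − 3Li_{3/2}(η)²` is strictly
positive for `0 < η < 1`. -/
theorem stmt_16 (lam β η : ℝ) (hlam : 0 < lam) (hβ : 0 < β)
    (hη0 : 0 < η) (hη1 : η < 1)
    (g : Matrix (Fin 2) (Fin 2) ℝ)
    (hg : g = !![15 / 4 * lam⁻¹ ^ 3 * β⁻¹ ^ 2 * Li (5 / 2) η,
                 3 / 2 * lam⁻¹ ^ 3 * β⁻¹ * Li (3 / 2) η;
                 3 / 2 * lam⁻¹ ^ 3 * β⁻¹ * Li (3 / 2) η,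
                 lam⁻¹ ^ 3 * Li (1 / 2) η]) :
    g.det = 3 / 4 * lam⁻¹ ^ 6 * β⁻¹ ^ 2 *
        (5 * Li (5 / 2) η * Li (1 / 2) η - 3 * Li (3 / 2) η ^ 2) ∧
      0 < 5 * Li (5 / 2) η * Li (1 / 2) η - 3 * Li (3 / 2) η ^ 2 := by
  constructor
  · subst hg
    rw [Matrix.det_fin_two_of]
    ring
  · have h1 := Li_sq_le hη0 hη1
    have h2 : 0 < Li (5 / 2) η := Li_pos (by norm_num) hη0 hη1
    have h3 : 0 < Li (1 / 2) η := Li_pos (by norm_num) hη0 hη1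
    nlinarith
end

section
/- The power series of A(η) = 5 Li_{5/2}(η) Li_{1/2}(η) − 3 Li_{3/2}(η)² has all coefficients nonnegative, with lowest-order term 2η². -/
lemma aux_e5 (m : ℕ) :
    (m : ℝ) ^ ((-5 : ℝ) / 2) = ((m : ℝ) ^ ((-1 : ℝ) / 2)) ^ (5 : ℕ) := by
  rw [show ((-5 : ℝ) / 2) = (-1 : ℝ) / 2 * (5 : ℕ) by norm_num,
    Real.rpow_mul (Nat.cast_nonneg m), Real.rpow_natCast]

lemma aux_e3 (m : ℕ) :
    (m : ℝ) ^ ((-3 : ℝ) / 2) = ((m : ℝ) ^ ((-1 : ℝ) / 2)) ^ (3 : ℕ) := by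
  rw [show ((-3 : ℝ) / 2) = (-1 : ℝ) / 2 * (3 : ℕ) by norm_num,
    Real.rpow_mul (Nat.cast_nonneg m), Real.rpow_natCast]

lemma aux_term (x y : ℝ) (hx : 0 ≤ x) (hy : 0 ≤ y) :
    0 ≤ (5 * x ^ 5 * y - 3 * x ^ 3 * y ^ 3) + (5 * y ^ 5 * x - 3 * y ^ 3 * x ^ 3) := by
  nlinarith [sq_nonneg (x ^ 2 - y ^ 2), mul_nonneg hx hy, sq_nonneg (x * y),
    mul_nonneg (mul_nonneg hx hy) (sq_nonneg (x ^ 2 - y ^ 2)),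
    mul_nonneg (mul_nonneg hx hy) (mul_nonneg (mul_nonneg hx hy) (mul_nonneg hx hy))]

/-- The power series of `A(η) = 5 Li_{5/2}(η) Li_{1/2}(η) − 3 Li_{3/2}(η)²`
has all coefficients nonnegative, with lowest-order term `2η²`. By the Cauchy product, the
coefficient of `η^n` is `Σ_{j+k=n, j,k≥1} (5 j^{-5/2} k^{-1/2} − 3 j^{-3/2} k^{-3/2})`:
this is `≥ 0` for all `n ≥ 2` and equals `2` for `n = 2` (for `n < 2` it is the empty
sum, i.e. `0`). -/
theorem stmt_17 (coeff : ℕ → ℝ)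
    (hcoeff : ∀ n, coeff n = ∑ j ∈ Finset.Ioo 0 n,
      (5 * (j : ℝ) ^ ((-5 : ℝ) / 2) * ((n - j : ℕ) : ℝ) ^ ((-1 : ℝ) / 2)
        - 3 * (j : ℝ) ^ ((-3 : ℝ) / 2) * ((n - j : ℕ) : ℝ) ^ ((-3 : ℝ) / 2))) :
    (∀ n, 2 ≤ n → 0 ≤ coeff n) ∧ coeff 2 = 2 := by
  constructor
  · intro n _
    rw [hcoeff]
    set F : ℕ → ℝ := fun j =>
      5 * (j : ℝ) ^ ((-5 : ℝ) / 2) * ((n - j : ℕ) : ℝ) ^ ((-1 : ℝ) / 2)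
        - 3 * (j : ℝ) ^ ((-3 : ℝ) / 2) * ((n - j : ℕ) : ℝ) ^ ((-3 : ℝ) / 2) with hF
    have hrefl : ∑ j ∈ Finset.Ioo 0 n, F j = ∑ j ∈ Finset.Ioo 0 n, F (n - j) := by
      apply Finset.sum_nbij' (fun j => n - j) (fun j => n - j) <;>
        intro a ha <;> simp only [Finset.mem_Ioo] at * <;> first
          | omega
          | (congr 1; omega)
    have key : 0 ≤ ∑ j ∈ Finset.Ioo 0 n, (F j + F (n - j)) := by
      apply Finset.sum_nonneg
      intro j hj
      simp only [Finset.mem_Ioo] at hj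
      have hsub : n - (n - j) = j := by omega
      simp only [hF, hsub, aux_e5, aux_e3]
      exact aux_term _ _ (Real.rpow_nonneg (Nat.cast_nonneg _) _)
        (Real.rpow_nonneg (Nat.cast_nonneg _) _)
    rw [Finset.sum_add_distrib, ← hrefl] at key
    linarith
  · rw [hcoeff]
    rw [show Finset.Ioo 0 2 = {1} by decide, Finset.sum_singleton]
    norm_num
end

section
/- As η → 1⁻, Li_{1/2}(η) ~ Γ(1/2)/(−ln η)^{1/2} and Li_{−1/2}(η) ~ Γ(3/2)/(−ln η)^{3/2}; consequently, with γ = −ln η, the Yukawa term C(η) = 20λ³ B(η)/A(η)³ of the bosonic ideal gas satisfies C ~ (2 ζ(3/2) λ³)/(5 √π ζ(5/2)) · γ^{−1/2} as γ → 0⁺, and in particular C diverges to +∞. -/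
open Filter Topology Asymptotics Real

/-- `A(η) = 5 Li_{5/2}(η) Li_{1/2}(η) − 3 Li_{3/2}(η)²`. -/
noncomputable def A (η : ℝ) : ℝ :=
  5 * Li (5 / 2) η * Li (1 / 2) η - 3 * Li (3 / 2) η ^ 2

/-- The numerator bracket `B` of the Yukawa term of the bosonic ideal gas. -/
noncomputable def B (η : ℝ) : ℝ :=
  5 * Li (5 / 2) η ^ 2 * Li (3 / 2) η * Li (1 / 2) η * Li (-1 / 2) η
    - 10 * Li (5 / 2) η ^ 2 * Li (1 / 2) η ^ 3
    - 3 * Li (5 / 2) η * Li (3 / 2) η ^ 3 * Li (-1 / 2) η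
    + 11 * Li (5 / 2) η * Li (3 / 2) η ^ 2 * Li (1 / 2) η ^ 2
    - 3 * Li (3 / 2) η ^ 4 * Li (1 / 2) η

open MeasureTheory Set

namespace Stmt19

noncomputable def f (a γ t : ℝ) : ℝ := t ^ (a - 1) * Real.exp (-(γ * t))

lemma f_nonneg (a γ : ℝ) {t : ℝ} (ht : 0 ≤ t) : 0 ≤ f a γ t :=
  mul_nonneg (Real.rpow_nonneg ht _) (Real.exp_pos _).le

lemma f_integrableOn {a γ : ℝ} (ha : 0 < a) (hγ : 0 < γ) : IntegrableOn (f a γ) (Ioi 0) := by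
  have h0 : IntegrableOn (fun u : ℝ => Real.exp (-u) * u ^ (a - 1)) (Ioi 0) :=
    Real.GammaIntegral_convergent ha
  have h1 : IntegrableOn (fun t : ℝ => Real.exp (-(γ * t)) * (γ * t) ^ (a - 1)) (Ioi 0) := by
    have := (integrableOn_Ioi_comp_mul_left_iff
      (fun u : ℝ => Real.exp (-u) * u ^ (a - 1)) 0 hγ).mpr (by simpa using h0)
    simpa using this
  have h2 : IntegrableOn
      (fun t : ℝ => γ ^ (1 - a) * (Real.exp (-(γ * t)) * (γ * t) ^ (a - 1))) (Ioi 0) :=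
    h1.const_mul _
  refine h2.congr_fun (fun t ht => ?_) measurableSet_Ioi
  have ht' : (0:ℝ) < t := ht
  beta_reduce
  rw [Real.mul_rpow hγ.le ht'.le, f]
  rw [show (1:ℝ) - a = -(a-1) by ring, Real.rpow_neg hγ.le]
  field_simp [(Real.rpow_pos_of_pos hγ (a-1)).ne']

lemma f_integral {a γ : ℝ} (ha : 0 < a) (hγ : 0 < γ) :
    ∫ t in Ioi 0, f a γ t = (1 / γ) ^ a * Real.Gamma a :=
  Real.integral_rpow_mul_exp_neg_mul_Ioi ha hγ

lemma iUnion_Ioc_nat : (⋃ k : ℕ, Ioc ((k : ℝ) + 1) ((k : ℝ) + 1 + 1)) = Ioi (1 : ℝ) := by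
  ext x
  simp only [mem_iUnion, mem_Ioc, mem_Ioi]
  constructor
  · rintro ⟨k, h1, _⟩
    have : (0:ℝ) ≤ (k:ℝ) := Nat.cast_nonneg k
    linarith
  · intro hx
    have hx0 : (0:ℝ) ≤ x := by linarith
    have h2 : 2 ≤ ⌈x⌉₊ := by
      have : 1 < ⌈x⌉₊ := by
        rw [Nat.lt_ceil]; exact_mod_cast hx
      omega
    refine ⟨⌈x⌉₊ - 2, ?_, ?_⟩
    · have := Nat.ceil_lt_add_one hx0
      have hc : ((⌈x⌉₊ - 2 : ℕ) : ℝ) = (⌈x⌉₊ : ℝ) - 2 := by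
        push_cast [Nat.cast_sub h2]; ring
      linarith
    · have := Nat.le_ceil x
      have hc : ((⌈x⌉₊ - 2 : ℕ) : ℝ) = (⌈x⌉₊ : ℝ) - 2 := by
        push_cast [Nat.cast_sub h2]; ring
      linarith

lemma pairwise_disjoint_Ioc :
    Pairwise (Function.onFun Disjoint fun k : ℕ => Ioc ((k : ℝ) + 1) ((k : ℝ) + 1 + 1)) := by
  intro i j hij
  rw [Function.onFun, Set.Ioc_disjoint_Ioc]
  rcases hij.lt_or_gt with h | h
  · have : (i:ℝ) + 1 ≤ (j:ℝ) := by exact_mod_cast h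
    exact min_le_of_left_le (le_max_of_le_right (by linarith))
  · have : (j:ℝ) + 1 ≤ (i:ℝ) := by exact_mod_cast h
    exact min_le_of_right_le (le_max_of_le_left (by linarith))

lemma hasSum_integral_Ioc {F : ℝ → ℝ} (hF : IntegrableOn F (Ioi 1)) :
    HasSum (fun k : ℕ => ∫ t in Ioc ((k : ℝ) + 1) ((k : ℝ) + 1 + 1), F t) (∫ t in Ioi 1, F t) := by
  have := MeasureTheory.hasSum_integral_iUnion
    (μ := volume) (s := fun k : ℕ => Ioc ((k : ℝ) + 1) ((k : ℝ) + 1 + 1))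
    (fun k => measurableSet_Ioc) pairwise_disjoint_Ioc (by rwa [iUnion_Ioc_nat])
  rwa [iUnion_Ioc_nat] at this

lemma integral_Ioc_le {F : ℝ → ℝ} {m C : ℝ} (hi : IntegrableOn F (Ioc m (m + 1)))
    (h : ∀ t ∈ Ioc m (m + 1), F t ≤ C) : ∫ t in Ioc m (m + 1), F t ≤ C := by
  have := MeasureTheory.setIntegral_mono_on hi (integrableOn_const (by
    simp [Real.volume_Ioc])) measurableSet_Ioc h
  calc ∫ t in Ioc m (m + 1), F t ≤ ∫ _ in Ioc m (m + 1), C := this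
    _ = C := by simp [Real.volume_Ioc]

lemma le_integral_Ioc {F : ℝ → ℝ} {m c : ℝ} (hi : IntegrableOn F (Ioc m (m + 1)))
    (h : ∀ t ∈ Ioc m (m + 1), c ≤ F t) : c ≤ ∫ t in Ioc m (m + 1), F t := by
  have := MeasureTheory.setIntegral_mono_on (integrableOn_const (by
    simp [Real.volume_Ioc])) hi measurableSet_Ioc h
  calc c = ∫ _ in Ioc m (m + 1), c := by simp [Real.volume_Ioc]
    _ ≤ _ := this

lemma Li_eq_tsum_f (s : ℝ) {γ : ℝ} (hγ : 0 < γ) :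
    Li s (Real.exp (-γ)) = ∑' k : ℕ, f (1 - s) γ ((k : ℝ) + 1) := by
  unfold Li f
  congr 1; ext k
  have h1 : Real.exp (-γ) ^ (k + 1) = Real.exp (-(γ * ((k : ℝ) + 1))) := by
    rw [← Real.exp_nat_mul]
    congr 1; push_cast; ring
  have h2 : ((k : ℝ) + 1) ^ (1 - s - 1) = (((k : ℝ) + 1) ^ s)⁻¹ := by
    rw [show (1:ℝ) - s - 1 = -s by ring, Real.rpow_neg (by positivity)]
  rw [h1, h2, div_eq_mul_inv, mul_comm]

lemma exp_pow_eq {γ : ℝ} (k : ℕ) : Real.exp (-γ) ^ (k + 1) = Real.exp (-(γ * ((k : ℝ) + 1))) := by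
  rw [← Real.exp_nat_mul]; congr 1; push_cast; ring

lemma summable_f {a γ : ℝ} (ha : a ≤ 2) (hγ : 0 < γ) :
    Summable (fun k : ℕ => f a γ ((k : ℝ) + 1)) := by
  have hr : ‖Real.exp (-γ)‖ < 1 := by
    rw [Real.norm_eq_abs, abs_of_pos (Real.exp_pos _)]
    exact Real.exp_lt_one_iff.mpr (by linarith)
  have hv : Summable (fun n : ℕ => (n : ℝ) ^ (1:ℕ) * Real.exp (-γ) ^ n) :=
    summable_pow_mul_geometric_of_norm_lt_one 1 hr
  have hv1 : Summable (fun k : ℕ => ((k : ℝ) + 1) * Real.exp (-γ) ^ (k + 1)) := by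
    have := (summable_nat_add_iff (f := fun n : ℕ => (n : ℝ) ^ (1:ℕ) * Real.exp (-γ) ^ n) 1).mpr hv
    refine this.congr fun k => ?_
    push_cast; ring
  refine hv1.of_nonneg_of_le (fun k => f_nonneg _ _ (by positivity)) fun k => ?_
  unfold f
  have hb : (1:ℝ) ≤ (k : ℝ) + 1 := by simp
  have h1 : ((k : ℝ) + 1) ^ (a - 1) ≤ ((k : ℝ) + 1) ^ ((1:ℝ)) :=
    Real.rpow_le_rpow_of_exponent_le hb (by linarith)
  rw [Real.rpow_one] at h1
  rw [exp_pow_eq]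
  exact mul_le_mul h1 le_rfl (Real.exp_pos _).le (by positivity)

lemma hasSum_shift {u : ℕ → ℝ} {S : ℝ} (h : HasSum u S) :
    HasSum (fun k : ℕ => u (k + 1)) (S - u 0) := by
  refine (hasSum_nat_add_iff (f := u) 1).mpr ?_
  rw [Finset.sum_range_one]
  simpa using h

section Squeeze

variable {γ : ℝ} (hγ : 0 < γ)

lemma int_Ioc_subset (m : ℝ) (hm : 0 ≤ m) : Ioc m (m + 1) ⊆ Ioi (0:ℝ) :=
  fun t ht => lt_of_le_of_lt hm ht.1

lemma bounds_half (hγ : 0 < γ) :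
    (1 / γ) ^ ((1:ℝ)/2) * Real.Gamma (1/2) - 2 ≤ Li (1/2) (Real.exp (-γ)) ∧
      Li (1/2) (Real.exp (-γ)) ≤ (1 / γ) ^ ((1:ℝ)/2) * Real.Gamma (1/2) + 1 := by
  set a : ℝ := 1/2 with ha_def
  have ha : (0:ℝ) < a := by norm_num
  have ha1 : a - 1 ≤ 0 := by norm_num
  set u : ℕ → ℝ := fun k => f a γ ((k : ℝ) + 1) with hu_def
  have hsummable : Summable u := summable_f (by norm_num) hγ
  set S : ℝ := ∑' k, u k with hS_def
  have hS : HasSum u S := hsummable.hasSum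
  have hint : IntegrableOn (f a γ) (Ioi 0) := f_integrableOn ha hγ
  have hint1 : IntegrableOn (f a γ) (Ioi 1) := hint.mono_set (Ioi_subset_Ioi zero_le_one)
  have hintIoc : ∀ m : ℝ, 0 ≤ m → IntegrableOn (f a γ) (Ioc m (m + 1)) :=
    fun m hm => hint.mono_set (int_Ioc_subset m hm)
  have hIsum := hasSum_integral_Ioc hint1
  have hsplit : ∫ t in Ioi 0, f a γ t
      = (∫ t in Ioc 0 1, f a γ t) + ∫ t in Ioi 1, f a γ t := by
    rw [← MeasureTheory.setIntegral_union (Set.Ioc_disjoint_Ioi le_rfl) measurableSet_Ioi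
      (by simpa using hintIoc 0 le_rfl) hint1, Set.Ioc_union_Ioi_eq_Ioi zero_le_one]
  have h01nonneg : 0 ≤ ∫ t in Ioc (0:ℝ) 1, f a γ t :=
    MeasureTheory.setIntegral_nonneg measurableSet_Ioc fun x hx => f_nonneg _ _ hx.1.le
  have hItot := f_integral ha hγ
  -- pointwise monotone-type bounds
  have hf_le : ∀ m : ℝ, 0 < m → ∀ t ∈ Ioc m (m + 1), f a γ t ≤ f a γ m := by
    intro m hm t ht
    have h1 : t ^ (a - 1) ≤ m ^ (a - 1) := Real.rpow_le_rpow_of_nonpos hm ht.1.le ha1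
    have h2 : Real.exp (-(γ * t)) ≤ Real.exp (-(γ * m)) :=
      Real.exp_le_exp.mpr (by nlinarith [ht.1.le])
    exact mul_le_mul h1 h2 (Real.exp_pos _).le (Real.rpow_nonneg hm.le _)
  have hf_ge : ∀ m : ℝ, 0 < m → ∀ t ∈ Ioc m (m + 1), f a γ (m + 1) ≤ f a γ t := by
    intro m hm t ht
    have h1 : (m + 1) ^ (a - 1) ≤ t ^ (a - 1) :=
      Real.rpow_le_rpow_of_nonpos (hm.trans ht.1) ht.2 ha1
    have h2 : Real.exp (-(γ * (m + 1))) ≤ Real.exp (-(γ * t)) :=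
      Real.exp_le_exp.mpr (by nlinarith [ht.2])
    exact mul_le_mul h1 h2 (Real.exp_pos _).le (Real.rpow_nonneg (hm.trans ht.1).le _)
  -- lower: ∫_{Ioi 1} ≤ S
  have hcast : ∀ k : ℕ, (0:ℝ) < (k:ℝ) + 1 := fun k => by positivity
  have hlow1 : (∫ t in Ioi 1, f a γ t) ≤ S := by
    refine hasSum_le (fun k => ?_) hIsum hS
    exact integral_Ioc_le (hintIoc ((k:ℝ)+1) (hcast k).le)
      (hf_le ((k:ℝ)+1) (hcast k))
  -- upper: S - u 0 ≤ ∫_{Ioi 1}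
  have hup1 : S - u 0 ≤ ∫ t in Ioi 1, f a γ t := by
    refine hasSum_le (fun k => ?_) (hasSum_shift hS) hIsum
    have : u (k + 1) = f a γ (((k:ℝ) + 1) + 1) := by
      simp only [hu_def]; push_cast; ring_nf
    rw [this]
    exact le_integral_Ioc (hintIoc ((k:ℝ)+1) (hcast k).le) (hf_ge ((k:ℝ)+1) (hcast k))
  have hu0 : u 0 ≤ 1 := by
    simp only [hu_def]
    unfold f
    rw [Nat.cast_zero, zero_add, Real.one_rpow, one_mul, mul_one]
    exact Real.exp_le_one_iff.mpr (by linarith)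
  -- ∫_{Ioc 0 1} ≤ 2
  have h01 : (∫ t in Ioc (0:ℝ) 1, f a γ t) ≤ 2 := by
    have hig : IntegrableOn (fun t : ℝ => t ^ (a - 1)) (Ioc 0 1) := by
      have := (intervalIntegral.intervalIntegrable_rpow' (a := 0) (b := 1)
        (r := a - 1) (by norm_num)).1
      simpa using this
    have hmono : (∫ t in Ioc (0:ℝ) 1, f a γ t) ≤ ∫ t in Ioc (0:ℝ) 1, t ^ (a - 1) := by
      refine MeasureTheory.setIntegral_mono_on (by simpa using hintIoc 0 le_rfl) hig
        measurableSet_Ioc fun t ht => ?_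
      unfold f
      have : Real.exp (-(γ * t)) ≤ 1 := Real.exp_le_one_iff.mpr (by nlinarith [ht.1])
      nlinarith [Real.rpow_nonneg ht.1.le (a - 1), this, Real.exp_pos (-(γ * t))]
    have hval : (∫ t in Ioc (0:ℝ) 1, t ^ (a - 1)) = 2 := by
      rw [← intervalIntegral.integral_of_le zero_le_one,
        integral_rpow (Or.inl (by norm_num))]
      rw [Real.zero_rpow (by norm_num), Real.one_rpow]
      norm_num
    linarith
  have hLiS : Li a (Real.exp (-γ)) = S := by
    rw [hS_def, hu_def, Li_eq_tsum_f a hγ, show (1:ℝ) - a = a by norm_num]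
  constructor
  · have : (∫ t in Ioi (1:ℝ), f a γ t) = (1/γ) ^ a * Real.Gamma a - ∫ t in Ioc (0:ℝ) 1, f a γ t := by
      rw [← hItot, hsplit]; ring
    rw [this] at hlow1
    linarith
  · have : (∫ t in Ioi (1:ℝ), f a γ t) ≤ (1/γ) ^ a * Real.Gamma a := by
      rw [← hItot, hsplit]; linarith
    linarith

lemma sqrt_succ_le (m : ℝ) (hm : 0 ≤ m) : (m + 1) ^ ((3:ℝ)/2 - 1) ≤ m ^ ((3:ℝ)/2 - 1) + 1 := by
  have h32 : ((3:ℝ)/2 - 1) = 1/2 := by norm_num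
  rw [h32, ← Real.sqrt_eq_rpow, ← Real.sqrt_eq_rpow]
  have h1 : Real.sqrt m + 1 = Real.sqrt ((Real.sqrt m + 1)^2) :=
    (Real.sqrt_sq (by positivity)).symm
  rw [h1]
  apply Real.sqrt_le_sqrt
  nlinarith [Real.sq_sqrt hm, Real.sqrt_nonneg m]

lemma bounds_neg_half {γ : ℝ} (hγ : 0 < γ) :
    (1 / γ) ^ ((3:ℝ)/2) * Real.Gamma (3/2) - 1 - 1/γ ≤ Li (-1/2) (Real.exp (-γ)) ∧
      Li (-1/2) (Real.exp (-γ)) ≤ Real.exp γ * ((1 / γ) ^ ((3:ℝ)/2) * Real.Gamma (3/2)) := by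
  set a : ℝ := 3/2 with ha_def
  have ha : (0:ℝ) < a := by norm_num
  have ha1 : (0:ℝ) ≤ a - 1 := by norm_num
  set u : ℕ → ℝ := fun k => f a γ ((k : ℝ) + 1) with hu_def
  have hsummable : Summable u := summable_f (by norm_num) hγ
  set S : ℝ := ∑' k, u k with hS_def
  have hS : HasSum u S := hsummable.hasSum
  have hint : IntegrableOn (f a γ) (Ioi 0) := f_integrableOn ha hγ
  have hint1 : IntegrableOn (f a γ) (Ioi 1) := hint.mono_set (Ioi_subset_Ioi zero_le_one)
  have hintIoc : ∀ m : ℝ, 0 ≤ m → IntegrableOn (f a γ) (Ioc m (m + 1)) :=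
    fun m hm => hint.mono_set (int_Ioc_subset m hm)
  have hIsum := hasSum_integral_Ioc hint1
  have hsplit : ∫ t in Ioi 0, f a γ t
      = (∫ t in Ioc 0 1, f a γ t) + ∫ t in Ioi 1, f a γ t := by
    rw [← MeasureTheory.setIntegral_union (Set.Ioc_disjoint_Ioi le_rfl) measurableSet_Ioi
      (by simpa using hintIoc 0 le_rfl) hint1, Set.Ioc_union_Ioi_eq_Ioi zero_le_one]
  have h01nonneg : 0 ≤ ∫ t in Ioc (0:ℝ) 1, f a γ t :=
    MeasureTheory.setIntegral_nonneg measurableSet_Ioc fun x hx => f_nonneg _ _ hx.1.le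
  have hItot := f_integral ha hγ
  have hcast : ∀ k : ℕ, (0:ℝ) < (k:ℝ) + 1 := fun k => by positivity
  -- pointwise bounds on intervals
  have hf_le : ∀ m : ℝ, 0 < m → ∀ t ∈ Ioc m (m + 1),
      f a γ t ≤ f a γ m + Real.exp (-(γ * m)) := by
    intro m hm t ht
    have h1 : t ^ (a - 1) ≤ m ^ (a - 1) + 1 := by
      calc t ^ (a - 1) ≤ (m + 1) ^ (a - 1) :=
            Real.rpow_le_rpow (hm.trans ht.1).le ht.2 ha1
        _ ≤ m ^ (a - 1) + 1 := sqrt_succ_le m hm.le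
    have h2 : Real.exp (-(γ * t)) ≤ Real.exp (-(γ * m)) :=
      Real.exp_le_exp.mpr (by nlinarith [ht.1.le])
    have h3 : f a γ t ≤ (m ^ (a - 1) + 1) * Real.exp (-(γ * m)) :=
      mul_le_mul h1 h2 (Real.exp_pos _).le (by positivity)
    calc f a γ t ≤ (m ^ (a - 1) + 1) * Real.exp (-(γ * m)) := h3
      _ = f a γ m + Real.exp (-(γ * m)) := by unfold f; ring
  have hf_ge : ∀ m : ℝ, 0 < m → ∀ t ∈ Ioc m (m + 1),
      Real.exp (-γ) * f a γ m ≤ f a γ t := by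
    intro m hm t ht
    have h1 : m ^ (a - 1) ≤ t ^ (a - 1) := Real.rpow_le_rpow hm.le ht.1.le ha1
    have h2 : Real.exp (-(γ * t)) ≥ Real.exp (-γ) * Real.exp (-(γ * m)) := by
      rw [← Real.exp_add]
      exact Real.exp_le_exp.mpr (by nlinarith [ht.2])
    calc Real.exp (-γ) * f a γ m = m ^ (a - 1) * (Real.exp (-γ) * Real.exp (-(γ * m))) := by
          unfold f; ring
      _ ≤ t ^ (a - 1) * Real.exp (-(γ * t)) :=
          mul_le_mul h1 h2 (by positivity) (Real.rpow_nonneg (hm.trans ht.1).le _)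
      _ = f a γ t := rfl
  -- geometric series
  have hr0 : (0:ℝ) ≤ Real.exp (-γ) := (Real.exp_pos _).le
  have hr1 : Real.exp (-γ) < 1 := Real.exp_lt_one_iff.mpr (by linarith)
  have hgeo : HasSum (fun k : ℕ => Real.exp (-γ) ^ (k + 1))
      (Real.exp (-γ) * (1 - Real.exp (-γ))⁻¹) := by
    have := (hasSum_geometric_of_lt_one hr0 hr1).mul_left (Real.exp (-γ))
    refine this.congr_fun fun k => ?_
    rw [pow_succ]; ring
  have hGle : Real.exp (-γ) * (1 - Real.exp (-γ))⁻¹ ≤ 1/γ := by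
    have hpos : 0 < 1 - Real.exp (-γ) := by linarith
    have key : γ * Real.exp (-γ) ≤ 1 - Real.exp (-γ) := by
      have := Real.add_one_le_exp γ
      have hmul := mul_le_mul_of_nonneg_right this hr0
      rw [← Real.exp_add] at hmul
      simp only [add_neg_cancel, Real.exp_zero] at hmul
      nlinarith
    rw [← div_eq_mul_inv, div_le_div_iff₀ hpos hγ]
    nlinarith
  -- upper: exp(-γ) * S ≤ ∫_{Ioi 1}
  have hup1 : Real.exp (-γ) * S ≤ ∫ t in Ioi 1, f a γ t := by
    refine hasSum_le (fun k => ?_) (hS.mul_left (Real.exp (-γ))) hIsum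
    exact le_integral_Ioc (hintIoc ((k:ℝ)+1) (hcast k).le) (hf_ge ((k:ℝ)+1) (hcast k))
  -- lower: ∫_{Ioi 1} ≤ S + G
  have hlow1 : (∫ t in Ioi 1, f a γ t)
      ≤ S + Real.exp (-γ) * (1 - Real.exp (-γ))⁻¹ := by
    refine hasSum_le (fun k => ?_) hIsum (hS.add hgeo)
    have hb := integral_Ioc_le (hintIoc ((k:ℝ)+1) (hcast k).le) (hf_le ((k:ℝ)+1) (hcast k))
    refine hb.trans (le_of_eq ?_)
    rw [exp_pow_eq]
  -- Ioc 0 1 integral ≤ 1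
  have h01 : (∫ t in Ioc (0:ℝ) 1, f a γ t) ≤ 1 := by
    have hone : (∫ _ in Ioc (0:ℝ) 1, (1:ℝ)) = 1 := by simp [Real.volume_Ioc]
    refine le_trans (MeasureTheory.setIntegral_mono_on (by simpa using hintIoc 0 le_rfl)
      (integrableOn_const (by simp [Real.volume_Ioc])) measurableSet_Ioc
      (fun t ht => ?_)) (le_of_eq hone)
    unfold f
    have e1 : t ^ (a - 1) ≤ 1 := Real.rpow_le_one ht.1.le ht.2 ha1
    have e2 : Real.exp (-(γ * t)) ≤ 1 := Real.exp_le_one_iff.mpr (by nlinarith [ht.1])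
    nlinarith [Real.rpow_nonneg ht.1.le (a - 1), Real.exp_pos (-(γ * t))]
  have hLiS : Li (-1/2) (Real.exp (-γ)) = S := by
    rw [hS_def, hu_def, Li_eq_tsum_f (-1/2) hγ, show (1:ℝ) - (-1/2) = a by norm_num]
  constructor
  · rw [hLiS]
    have hIoi1 : (∫ t in Ioi (1:ℝ), f a γ t) ≥ (1/γ) ^ a * Real.Gamma a - 1 := by
      rw [← hItot, hsplit]; linarith
    linarith
  · rw [hLiS]
    have hIoi1 : (∫ t in Ioi (1:ℝ), f a γ t) ≤ (1/γ) ^ a * Real.Gamma a := by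
      rw [← hItot, hsplit]; linarith
    have h4 : Real.exp (-γ) * S ≤ (1/γ) ^ a * Real.Gamma a := le_trans hup1 hIoi1
    have h5 := mul_le_mul_of_nonneg_left h4 (Real.exp_pos γ).le
    rw [← mul_assoc, ← Real.exp_add, add_neg_cancel, Real.exp_zero, one_mul] at h5
    exact h5

end Squeeze

lemma tendsto_rpow_zero' {c : ℝ} (hc : 0 < c) :
    Tendsto (fun γ : ℝ => γ ^ c) (𝓝[>] 0) (𝓝 0) := by
  have h := (Real.continuousAt_rpow_const 0 c (Or.inr hc.le)).tendsto
  rw [Real.zero_rpow hc.ne'] at h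
  exact h.mono_left nhdsWithin_le_nhds

lemma tendsto_Li_half :
    Tendsto (fun γ : ℝ => Li (1/2) (Real.exp (-γ)) * γ ^ ((1:ℝ)/2)) (𝓝[>] 0)
      (𝓝 (Real.Gamma (1/2))) := by
  have h12 := tendsto_rpow_zero' one_half_pos
  have hlo : Tendsto (fun γ : ℝ => Real.Gamma (1/2) - 2 * γ ^ ((1:ℝ)/2)) (𝓝[>] 0)
      (𝓝 (Real.Gamma (1/2))) := by
    have := (tendsto_const_nhds (x := Real.Gamma (1/2))
      (f := 𝓝[>] (0:ℝ))).sub (h12.const_mul 2)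
    simpa using this
  have hhi : Tendsto (fun γ : ℝ => Real.Gamma (1/2) + γ ^ ((1:ℝ)/2)) (𝓝[>] 0)
      (𝓝 (Real.Gamma (1/2))) := by
    have := (tendsto_const_nhds (x := Real.Gamma (1/2)) (f := 𝓝[>] (0:ℝ))).add h12
    simpa using this
  refine tendsto_of_tendsto_of_tendsto_of_le_of_le' hlo hhi ?_ ?_
  · filter_upwards [self_mem_nhdsWithin] with γ (hγ : (0:ℝ) < γ)
    have hone : (1/γ) ^ ((1:ℝ)/2) * γ ^ ((1:ℝ)/2) = 1 := by
      rw [← Real.mul_rpow (by positivity) hγ.le, one_div_mul_cancel hγ.ne', Real.one_rpow]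
    have h := mul_le_mul_of_nonneg_right (bounds_half hγ).1 (Real.rpow_nonneg hγ.le ((1:ℝ)/2))
    have e : ((1/γ) ^ ((1:ℝ)/2) * Real.Gamma (1/2) - 2) * γ ^ ((1:ℝ)/2)
        = Real.Gamma (1/2) - 2 * γ ^ ((1:ℝ)/2) := by
      calc ((1/γ) ^ ((1:ℝ)/2) * Real.Gamma (1/2) - 2) * γ ^ ((1:ℝ)/2)
          = ((1/γ) ^ ((1:ℝ)/2) * γ ^ ((1:ℝ)/2)) * Real.Gamma (1/2)
            - 2 * γ ^ ((1:ℝ)/2) := by ring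
        _ = _ := by rw [hone]; ring
    rw [e] at h; exact h
  · filter_upwards [self_mem_nhdsWithin] with γ (hγ : (0:ℝ) < γ)
    have hone : (1/γ) ^ ((1:ℝ)/2) * γ ^ ((1:ℝ)/2) = 1 := by
      rw [← Real.mul_rpow (by positivity) hγ.le, one_div_mul_cancel hγ.ne', Real.one_rpow]
    have h := mul_le_mul_of_nonneg_right (bounds_half hγ).2 (Real.rpow_nonneg hγ.le ((1:ℝ)/2))
    have e : ((1/γ) ^ ((1:ℝ)/2) * Real.Gamma (1/2) + 1) * γ ^ ((1:ℝ)/2)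
        = Real.Gamma (1/2) + γ ^ ((1:ℝ)/2) := by
      calc ((1/γ) ^ ((1:ℝ)/2) * Real.Gamma (1/2) + 1) * γ ^ ((1:ℝ)/2)
          = ((1/γ) ^ ((1:ℝ)/2) * γ ^ ((1:ℝ)/2)) * Real.Gamma (1/2)
            + γ ^ ((1:ℝ)/2) := by ring
        _ = _ := by rw [hone]; ring
    refine h.trans (le_of_eq e)

lemma tendsto_Li_neg_half :
    Tendsto (fun γ : ℝ => Li (-1/2) (Real.exp (-γ)) * γ ^ ((3:ℝ)/2)) (𝓝[>] 0)
      (𝓝 (Real.Gamma (3/2))) := by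
  have h12 := tendsto_rpow_zero' one_half_pos
  have h32 := tendsto_rpow_zero' (by norm_num : (0:ℝ) < 3/2)
  have hlo : Tendsto (fun γ : ℝ => Real.Gamma (3/2) - γ ^ ((3:ℝ)/2) - γ ^ ((1:ℝ)/2)) (𝓝[>] 0)
      (𝓝 (Real.Gamma (3/2))) := by
    have := ((tendsto_const_nhds (x := Real.Gamma (3/2)) (f := 𝓝[>] (0:ℝ))).sub h32).sub h12
    simpa using this
  have hhi : Tendsto (fun γ : ℝ => Real.exp γ * Real.Gamma (3/2)) (𝓝[>] 0)
      (𝓝 (Real.Gamma (3/2))) := by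
    have := ((Real.continuous_exp.tendsto 0).mono_left
      (nhdsWithin_le_nhds (s := Ioi (0:ℝ)))).mul_const (Real.Gamma (3/2))
    simpa [Real.exp_zero] using this
  refine tendsto_of_tendsto_of_tendsto_of_le_of_le' hlo hhi ?_ ?_
  · filter_upwards [self_mem_nhdsWithin] with γ (hγ : (0:ℝ) < γ)
    have hone : (1/γ) ^ ((3:ℝ)/2) * γ ^ ((3:ℝ)/2) = 1 := by
      rw [← Real.mul_rpow (by positivity) hγ.le, one_div_mul_cancel hγ.ne', Real.one_rpow]
    have htwo : (1/γ) * γ ^ ((3:ℝ)/2) = γ ^ ((1:ℝ)/2) := by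
      rw [one_div, ← Real.rpow_neg_one γ, ← Real.rpow_add hγ]; norm_num
    have h := mul_le_mul_of_nonneg_right (bounds_neg_half hγ).1
      (Real.rpow_nonneg hγ.le ((3:ℝ)/2))
    have e : ((1/γ) ^ ((3:ℝ)/2) * Real.Gamma (3/2) - 1 - 1/γ) * γ ^ ((3:ℝ)/2)
        = Real.Gamma (3/2) - γ ^ ((3:ℝ)/2) - γ ^ ((1:ℝ)/2) := by
      calc ((1/γ) ^ ((3:ℝ)/2) * Real.Gamma (3/2) - 1 - 1/γ) * γ ^ ((3:ℝ)/2)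
          = ((1/γ) ^ ((3:ℝ)/2) * γ ^ ((3:ℝ)/2)) * Real.Gamma (3/2)
            - γ ^ ((3:ℝ)/2) - (1/γ) * γ ^ ((3:ℝ)/2) := by ring
        _ = _ := by rw [hone, htwo]; ring
    rw [e] at h; exact h
  · filter_upwards [self_mem_nhdsWithin] with γ (hγ : (0:ℝ) < γ)
    have hone : (1/γ) ^ ((3:ℝ)/2) * γ ^ ((3:ℝ)/2) = 1 := by
      rw [← Real.mul_rpow (by positivity) hγ.le, one_div_mul_cancel hγ.ne', Real.one_rpow]
    have h := mul_le_mul_of_nonneg_right (bounds_neg_half hγ).2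
      (Real.rpow_nonneg hγ.le ((3:ℝ)/2))
    have e : Real.exp γ * ((1/γ) ^ ((3:ℝ)/2) * Real.Gamma (3/2)) * γ ^ ((3:ℝ)/2)
        = Real.exp γ * Real.Gamma (3/2) := by
      calc Real.exp γ * ((1/γ) ^ ((3:ℝ)/2) * Real.Gamma (3/2)) * γ ^ ((3:ℝ)/2)
          = Real.exp γ * Real.Gamma (3/2) * ((1/γ) ^ ((3:ℝ)/2) * γ ^ ((3:ℝ)/2)) := by ring
        _ = _ := by rw [hone]; ring
    refine h.trans (le_of_eq e)

-- η-side
lemma mem_Ioo_nhds : Ioo (0:ℝ) 1 ∈ 𝓝[<] (1:ℝ) :=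
  Ioo_mem_nhdsLT_of_mem ⟨zero_lt_one, le_rfl⟩

lemma tendsto_neg_log : Tendsto (fun η : ℝ => -Real.log η) (𝓝[<] (1:ℝ)) (𝓝[>] (0:ℝ)) := by
  rw [tendsto_nhdsWithin_iff]
  constructor
  · have := ((Real.continuousAt_log one_ne_zero).tendsto.mono_left
      (nhdsWithin_le_nhds (s := Iio (1:ℝ)))).neg
    simpa [Real.log_one] using this
  · filter_upwards [mem_Ioo_nhds] with η hη
    simpa using Real.log_neg hη.1 hη.2

lemma comp_log {s c e : ℝ}
    (h : Tendsto (fun γ : ℝ => Li s (Real.exp (-γ)) * γ ^ e) (𝓝[>] (0:ℝ)) (𝓝 c)) :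
    Tendsto (fun η : ℝ => Li s η * (-Real.log η) ^ e) (𝓝[<] (1:ℝ)) (𝓝 c) := by
  refine (h.comp tendsto_neg_log).congr' ?_
  filter_upwards [mem_Ioo_nhds] with η hη
  simp only [Function.comp]
  rw [neg_neg, Real.exp_log hη.1]

lemma tendsto_Li_gt_one {s : ℝ} (hs : 1 < s) :
    Tendsto (fun η : ℝ => Li s η) (𝓝[<] (1:ℝ)) (𝓝 (Li s 1)) := by
  unfold Li
  have hb : Summable (fun k : ℕ => (((k:ℝ) + 1) ^ s)⁻¹) := by
    have h0 := Real.summable_nat_rpow_inv.mpr hs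
    have h1 := (summable_nat_add_iff 1).mpr h0
    refine h1.congr fun k => ?_
    push_cast; ring_nf
  refine tendsto_tsum_of_dominated_convergence hb (fun k => ?_) ?_
  · exact (((continuous_pow (k+1)).tendsto 1).mono_left nhdsWithin_le_nhds).div_const _
  · filter_upwards [mem_Ioo_nhds] with η hη k
    have hc : (0:ℝ) < ((k:ℝ) + 1) ^ s := Real.rpow_pos_of_pos (by positivity) s
    rw [Real.norm_eq_abs, abs_div, abs_pow, abs_of_pos hη.1, abs_of_pos hc, inv_eq_one_div]
    have hp : η ^ (k+1) ≤ 1 := pow_le_one₀ hη.1.le hη.2.le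
    gcongr

lemma Li_one_pos {s : ℝ} (hs : 1 < s) : 0 < Li s 1 := by
  unfold Li
  have hb : Summable (fun k : ℕ => (1:ℝ) ^ (k+1) / ((k:ℝ) + 1) ^ s) := by
    have h0 := Real.summable_nat_rpow_inv.mpr hs
    have h1 := (summable_nat_add_iff 1).mpr h0
    refine h1.congr fun k => ?_
    push_cast
    rw [one_pow, div_eq_mul_inv, one_mul]
  refine Summable.tsum_pos hb (fun k => by positivity) 0 (by norm_num)

end Stmt19

open Stmt19 in
/-- As `η → 1⁻`, `Li_{1/2}(η) ~ Γ(1/2)/(−ln η)^{1/2}` and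
`Li_{−1/2}(η) ~ Γ(3/2)/(−ln η)^{3/2}`; consequently, with `γ = −ln η`, the Yukawa term
`C(η) = 20λ³ B(η)/A(η)³` of the bosonic ideal gas satisfies
`C ~ (2 ζ(3/2) λ³)/(5 √π ζ(5/2)) · γ^{−1/2}` as `γ → 0⁺` (i.e. as `η → 1⁻`), and in
particular `C` diverges to `+∞`. (Here `ζ(s) = Li s 1` for `s > 1`.) -/
theorem stmt_19 (lam : ℝ) (hlam : 0 < lam) (C : ℝ → ℝ)
    (hC : ∀ η, C η = 20 * lam ^ 3 * B η / (A η) ^ 3) :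
    (fun η => Li (1 / 2) η) ~[𝓝[<] (1 : ℝ)]
        (fun η => Real.Gamma (1 / 2) / (-Real.log η) ^ ((1 : ℝ) / 2)) ∧
      (fun η => Li (-1 / 2) η) ~[𝓝[<] (1 : ℝ)]
        (fun η => Real.Gamma (3 / 2) / (-Real.log η) ^ ((3 : ℝ) / 2)) ∧
      C ~[𝓝[<] (1 : ℝ)]
        (fun η => 2 * Li (3 / 2) 1 * lam ^ 3 / (5 * Real.sqrt π * Li (5 / 2) 1) *
          (-Real.log η) ^ (-(1 : ℝ) / 2)) ∧
      Tendsto C (𝓝[<] (1 : ℝ)) atTop := by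
  have hπ : (0:ℝ) < Real.sqrt π := Real.sqrt_pos.mpr Real.pi_pos
  have hΓh : Real.Gamma (1/2) = Real.sqrt π := Real.Gamma_one_half_eq
  have hΓ3 : Real.Gamma (3/2) = Real.sqrt π / 2 := by
    rw [show (3:ℝ)/2 = 1/2 + 1 by norm_num, Real.Gamma_add_one (by norm_num), hΓh]; ring
  set l : Filter ℝ := 𝓝[<] (1:ℝ) with hl
  set z3 : ℝ := Li (3/2) 1 with hz3def
  set z5 : ℝ := Li (5/2) 1 with hz5def
  have hz3 : 0 < z3 := Li_one_pos (by norm_num)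
  have hz5 : 0 < z5 := Li_one_pos (by norm_num)
  set w : ℝ → ℝ := fun η => (-Real.log η) ^ ((1:ℝ)/2) with hwdef
  -- eventual facts
  have hev : ∀ᶠ η in l, 0 < -Real.log η := by
    filter_upwards [mem_Ioo_nhds] with η hη
    simpa using Real.log_neg hη.1 hη.2
  have hwpos : ∀ᶠ η in l, 0 < w η := by
    filter_upwards [hev] with η hη
    exact Real.rpow_pos_of_pos hη _
  -- basic limits
  have hP : Tendsto (fun η => Li (1/2) η * w η) l (𝓝 (Real.Gamma (1/2))) :=
    comp_log tendsto_Li_half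
  have hQ0 : Tendsto (fun η => Li (-1/2) η * (-Real.log η) ^ ((3:ℝ)/2)) l
      (𝓝 (Real.Gamma (3/2))) := comp_log tendsto_Li_neg_half
  have hwcube : ∀ᶠ η in l, (w η) ^ (3:ℕ) = (-Real.log η) ^ ((3:ℝ)/2) := by
    filter_upwards [hev] with η hη
    rw [hwdef, ← Real.rpow_natCast ((-Real.log η) ^ ((1:ℝ)/2)) 3, ← Real.rpow_mul hη.le]
    norm_num
  have hwsq : ∀ᶠ η in l, (w η) ^ (2:ℕ) = -Real.log η := by
    filter_upwards [hev] with η hη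
    rw [hwdef, ← Real.rpow_natCast ((-Real.log η) ^ ((1:ℝ)/2)) 2, ← Real.rpow_mul hη.le]
    norm_num
  have hQ : Tendsto (fun η => Li (-1/2) η * (w η) ^ (3:ℕ)) l (𝓝 (Real.Gamma (3/2))) := by
    refine hQ0.congr' ?_
    filter_upwards [hwcube] with η h
    rw [h]
  have ha5 : Tendsto (fun η => Li (5/2) η) l (𝓝 z5) := tendsto_Li_gt_one (by norm_num)
  have hb3 : Tendsto (fun η => Li (3/2) η) l (𝓝 z3) := tendsto_Li_gt_one (by norm_num)
  have hw0 : Tendsto w l (𝓝 0) := (tendsto_rpow_zero' one_half_pos).comp tendsto_neg_log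
  -- A asymptotics
  have hA : Tendsto (fun η => A η * w η) l (𝓝 (5 * z5 * Real.sqrt π)) := by
    have h1 : Tendsto (fun η => 5 * Li (5/2) η * (Li (1/2) η * w η)
        - 3 * Li (3/2) η ^ 2 * w η) l
        (𝓝 (5 * z5 * Real.Gamma (1/2) - 3 * z3 ^ 2 * 0)) :=
      (((ha5.const_mul 5).mul hP)).sub (((hb3.pow 2).const_mul 3).mul hw0)
    rw [hΓh, show 5 * z5 * Real.sqrt π - 3 * z3 ^ 2 * 0 = 5 * z5 * Real.sqrt π by ring] at h1
    exact h1.congr (fun η => by simp only [A]; ring)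
  -- B asymptotics
  have hB : Tendsto (fun η => B η * (w η) ^ (4:ℕ)) l
      (𝓝 (5 * z5 ^ 2 * z3 * (Real.sqrt π * (Real.sqrt π / 2)))) := by
    have h1 : Tendsto (fun η =>
        5 * Li (5/2) η ^ 2 * Li (3/2) η * (Li (1/2) η * w η) * (Li (-1/2) η * (w η) ^ (3:ℕ))
        - 10 * Li (5/2) η ^ 2 * (Li (1/2) η * w η) ^ 3 * w η
        - 3 * Li (5/2) η * Li (3/2) η ^ 3 * (Li (-1/2) η * (w η) ^ (3:ℕ)) * w η
        + 11 * Li (5/2) η * Li (3/2) η ^ 2 * (Li (1/2) η * w η) ^ 2 * (w η) ^ (2:ℕ)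
        - 3 * Li (3/2) η ^ 4 * (Li (1/2) η * w η) * (w η) ^ (3:ℕ)) l
        (𝓝 (5 * z5 ^ 2 * z3 * Real.Gamma (1/2) * Real.Gamma (3/2)
          - 10 * z5 ^ 2 * Real.Gamma (1/2) ^ 3 * 0
          - 3 * z5 * z3 ^ 3 * Real.Gamma (3/2) * 0
          + 11 * z5 * z3 ^ 2 * Real.Gamma (1/2) ^ 2 * 0 ^ (2:ℕ)
          - 3 * z3 ^ 4 * Real.Gamma (1/2) * 0 ^ (3:ℕ))) := by
      refine ((((((((ha5.pow 2).const_mul 5).mul hb3).mul hP).mul hQ).sub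
        ((((ha5.pow 2).const_mul 10).mul (hP.pow 3)).mul hw0)).sub
        (((((ha5.const_mul 3).mul (hb3.pow 3)).mul hQ).mul hw0))).add
        (((((ha5.const_mul 11).mul (hb3.pow 2)).mul (hP.pow 2)).mul (hw0.pow 2)))).sub
        ((((hb3.pow 4).const_mul 3).mul hP).mul (hw0.pow 3))
    rw [hΓh, hΓ3, show 5 * z5 ^ 2 * z3 * Real.sqrt π * (Real.sqrt π / 2)
          - 10 * z5 ^ 2 * Real.sqrt π ^ 3 * 0
          - 3 * z5 * z3 ^ 3 * (Real.sqrt π / 2) * 0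
          + 11 * z5 * z3 ^ 2 * Real.sqrt π ^ 2 * (0:ℝ) ^ (2:ℕ)
          - 3 * z3 ^ 4 * Real.sqrt π * (0:ℝ) ^ (3:ℕ)
        = 5 * z5 ^ 2 * z3 * (Real.sqrt π * (Real.sqrt π / 2)) by ring] at h1
    exact h1.congr (fun η => by simp only [B]; ring)
  -- A eventually nonzero
  have hAne : ∀ᶠ η in l, A η ≠ 0 := by
    have hne : (5 * z5 * Real.sqrt π) ≠ 0 := by positivity
    filter_upwards [hA.eventually_ne hne] with η h h0
    exact h (by rw [h0]; ring)
  set K : ℝ := 2 * z3 * lam ^ 3 / (5 * Real.sqrt π * z5) with hKdef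
  have hK : 0 < K := div_pos (by positivity) (by positivity)
  have hCw : Tendsto (fun η => C η * w η) l (𝓝 K) := by
    have hd : ((5 * z5 * Real.sqrt π) ^ 3 : ℝ) ≠ 0 := by positivity
    have hq : Tendsto (fun η => 20 * lam ^ 3 * (B η * (w η) ^ (4:ℕ)) / ((A η * w η) ^ 3)) l
        (𝓝 (20 * lam ^ 3 * (5 * z5 ^ 2 * z3 * (Real.sqrt π * (Real.sqrt π / 2)))
          / ((5 * z5 * Real.sqrt π) ^ 3))) :=
      (hB.const_mul _).div (hA.pow 3) hd
    have hval : (20 * lam ^ 3 * (5 * z5 ^ 2 * z3 * (Real.sqrt π * (Real.sqrt π / 2)))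
        / ((5 * z5 * Real.sqrt π) ^ 3)) = K := by
      rw [hKdef]
      field_simp
      norm_num
    rw [hval] at hq
    refine hq.congr' ?_
    filter_upwards [hAne, hwpos] with η hA0 hw'
    rw [hC η]
    field_simp
  refine ⟨?_, ?_, ?_, ?_⟩
  · refine (isEquivalent_iff_tendsto_one ?_).mpr ?_
    · filter_upwards [hwpos] with η hw'
      refine div_ne_zero (by rw [hΓh]; positivity) ?_
      simpa [hwdef] using hw'.ne'
    · have h1 := hP.div_const (Real.Gamma (1/2))
      rw [div_self (by rw [hΓh]; positivity)] at h1
      refine h1.congr' ?_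
      have hΓne : Real.Gamma (1/2) ≠ 0 := by rw [hΓh]; positivity
      filter_upwards [hwpos] with η hw'
      have hw'' : (-Real.log η) ^ ((1:ℝ)/2) ≠ 0 := by simpa [hwdef] using hw'.ne'
      simp only [hwdef]
      simp only [Pi.div_apply]
      field_simp
  · refine (isEquivalent_iff_tendsto_one ?_).mpr ?_
    · filter_upwards [hev] with η hη
      exact div_ne_zero (by rw [hΓ3]; positivity)
        (Real.rpow_pos_of_pos hη _).ne'
    · have h1 := hQ0.div_const (Real.Gamma (3/2))
      rw [div_self (by rw [hΓ3]; positivity)] at h1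
      refine h1.congr' ?_
      have hΓne : Real.Gamma (3/2) ≠ 0 := by rw [hΓ3]; positivity
      filter_upwards [hev] with η hη
      have hw'' : (-Real.log η) ^ ((3:ℝ)/2) ≠ 0 := (Real.rpow_pos_of_pos hη _).ne'
      simp only [Pi.div_apply]
      field_simp
  · refine (isEquivalent_iff_tendsto_one ?_).mpr ?_
    · filter_upwards [hev] with η hη
      exact mul_ne_zero hK.ne' (Real.rpow_pos_of_pos hη _).ne'
    · have h1 := hCw.div_const K
      rw [div_self hK.ne'] at h1
      refine h1.congr' ?_
      filter_upwards [hev, hwpos] with η hη hw'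
      have hrw : (-Real.log η) ^ (-(1:ℝ)/2) = (w η)⁻¹ := by
        rw [show (-(1:ℝ)/2) = -((1:ℝ)/2) by norm_num, Real.rpow_neg hη.le, hwdef]
      simp only [Pi.div_apply]
      rw [hrw]
      rw [div_eq_div_iff hK.ne' (mul_ne_zero hK.ne' (inv_ne_zero hw'.ne'))]
      field_simp
  · have hwtend : Tendsto w l (𝓝[>] 0) :=
      tendsto_nhdsWithin_iff.mpr ⟨hw0, hwpos⟩
    have hinv : Tendsto (fun η => (w η)⁻¹) l atTop := hwtend.inv_tendsto_nhdsGT_zero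
    have hmul := Filter.Tendsto.pos_mul_atTop hK hCw hinv
    refine hmul.congr' ?_
    filter_upwards [hwpos] with η hw'
    field_simp
end
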